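/- For the double-calibration estimator T̂_{Y(dcal)} = â_R^t Â_R^{-1} T_{X(B)} + ĉ_R^t Ĉ_R^{-1} (T_Z − T̂_{Z(B)}) viewed as a function of the five HT-estimated quantities (Â_R, â_R, Ĉ_R, ĉ_R, T̂_{Z(B)}), its first-order Taylor expansion around the population values (A_R, a_R, C_R, c_R, T_{Z(B)}) has linear term Σ_{j∈S} u_j/π_j − Σ_{j∈U_B} u_j, where u_j = r_j (y_j x_j^t − a_R^t A_R^{-1} x_j x_j^t) A_R^{-1} T_{X(B)} + r_j (y_j z_j^t − c_R^t C_R^{-1} z_j z_j^t) C_R^{-1} (T_Z − T_{Z(B)}) − c_R^t C_R^{-1} z_j. -/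

import Mathlib

open Matrix Finset

section Stmt10Aux


lemma det_diff (n : ℕ) : Differentiable ℝ (fun A : Fin n → Fin n → ℝ => (Matrix.of A).det) := by
  simp only [Matrix.det_apply']
  apply Differentiable.fun_sum
  intro σ _
  apply Differentiable.const_mul
  intro A
  have h : ∀ i ∈ Finset.univ, HasFDerivAt (fun A : Fin n → Fin n → ℝ => Matrix.of A (σ i) i)
      (fderiv ℝ (fun A : Fin n → Fin n → ℝ => Matrix.of A (σ i) i) A) A := fun i _ =>
    (show Differentiable ℝ (fun A : Fin n → Fin n → ℝ => A (σ i) i) by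
      fun_prop).differentiableAt.hasFDerivAt
  exact (HasFDerivAt.finset_prod h).differentiableAt

lemma update_diff {n : ℕ} (j : Fin n) (c : Fin n → ℝ) :
    Differentiable ℝ (fun A : Fin n → Fin n → ℝ => Function.update A j c) := by
  rw [differentiable_pi]
  intro k
  by_cases hk : k = j
  · have : (fun A : Fin n → Fin n → ℝ => Function.update A j c k) = fun _ => c := by
      funext A; subst hk; simp
    rw [this]; exact differentiable_const c
  · simpa [Function.update_apply, hk] using differentiable_apply k

lemma adj_entry_diff {n : ℕ} (i j : Fin n) :
    Differentiable ℝ (fun A : Fin n → Fin n → ℝ => (Matrix.of A).adjugate i j) := by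
  simp only [Matrix.adjugate_apply]
  have : (fun A : Fin n → Fin n → ℝ => ((Matrix.of A).updateRow j (Pi.single i 1)).det)
      = (fun A : Fin n → Fin n → ℝ => (Matrix.of A).det) ∘
        (fun A : Fin n → Fin n → ℝ => Function.update A j (Pi.single i 1)) := rfl
  rw [this]
  exact (det_diff n).comp (update_diff j _)

lemma inv_entry_diff {n : ℕ} {A0 : Fin n → Fin n → ℝ} (h : IsUnit (Matrix.of A0)) (i j : Fin n) :
    DifferentiableAt ℝ (fun A : Fin n → Fin n → ℝ => (Matrix.of A)⁻¹ i j) A0 := by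
  have hdet : (Matrix.of A0).det ≠ 0 := ((Matrix.isUnit_iff_isUnit_det _).mp h).ne_zero
  simp only [Matrix.inv_def, Matrix.smul_apply, Ring.inverse_eq_inv', smul_eq_mul]
  exact (((det_diff n).differentiableAt.inv hdet)).mul ((adj_entry_diff i j).differentiableAt)

lemma line_hasDerivAt {n : ℕ} (A dA : Fin n → Fin n → ℝ) (k j : Fin n) :
    HasDerivAt (fun t : ℝ => (A + t • dA) k j) (dA k j) 0 := by
  have : (fun t : ℝ => (A + t • dA) k j) = fun t => A k j + t * dA k j := by
    funext t; simp [Pi.smul_apply]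
  rw [this]
  simpa using ((hasDerivAt_id (0:ℝ)).mul_const (dA k j)).const_add (A k j)

lemma line_vec_hasDerivAt {n : ℕ} (a da : Fin n → ℝ) (i : Fin n) :
    HasDerivAt (fun t : ℝ => (a + t • da) i) (da i) 0 := by
  have : (fun t : ℝ => (a + t • da) i) = fun t => a i + t * da i := by
    funext t; simp [Pi.smul_apply]
  rw [this]
  simpa using ((hasDerivAt_id (0:ℝ)).mul_const (da i)).const_add (a i)

lemma inv_entry_line_diff {n : ℕ} (A dA : Fin n → Fin n → ℝ) (h : IsUnit (Matrix.of A))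
    (i j : Fin n) :
    DifferentiableAt ℝ (fun t : ℝ => (Matrix.of (A + t • dA))⁻¹ i j) 0 := by
  have hline : DifferentiableAt ℝ (fun t : ℝ => A + t • dA) 0 := by
    apply DifferentiableAt.const_add
    exact (differentiableAt_id.smul_const dA)
  have := (inv_entry_diff (A0 := A) h i j)
  have h0 : A + (0:ℝ) • dA = A := by simp
  exact (h0 ▸ this : DifferentiableAt ℝ _ (A + (0:ℝ) • dA)).comp 0 hline

lemma inv_line_hasDerivAt {n : ℕ} (A dA : Fin n → Fin n → ℝ) (h : IsUnit (Matrix.of A))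
    (i j : Fin n) :
    HasDerivAt (fun t : ℝ => (Matrix.of (A + t • dA))⁻¹ i j)
      ((-((Matrix.of A)⁻¹ * Matrix.of dA * (Matrix.of A)⁻¹)) i j) 0 := by
  classical
  set B := (Matrix.of A)⁻¹ with hB
  have hdiff : ∀ i j, DifferentiableAt ℝ (fun t : ℝ => (Matrix.of (A + t • dA))⁻¹ i j) 0 :=
    fun i j => inv_entry_line_diff A dA h i j
  set D : Matrix (Fin n) (Fin n) ℝ :=
    Matrix.of (fun i j => deriv (fun t : ℝ => (Matrix.of (A + t • dA))⁻¹ i j) 0) with hD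
  have hg : ∀ i j, HasDerivAt (fun t : ℝ => (Matrix.of (A + t • dA))⁻¹ i j) (D i j) 0 :=
    fun i j => (hdiff i j).hasDerivAt
  have hdet : (Matrix.of A).det ≠ 0 := ((Matrix.isUnit_iff_isUnit_det _).mp h).ne_zero
  have hcont : ContinuousAt (fun t : ℝ => (Matrix.of (A + t • dA)).det) 0 := by
    apply ((det_diff n).continuous.comp ?_).continuousAt
    exact (continuous_const.add (continuous_id.smul continuous_const))
  have hev : ∀ᶠ t : ℝ in nhds 0, (Matrix.of (A + t • dA)).det ≠ 0 := by
    have h0 : (fun t : ℝ => (Matrix.of (A + t • dA)).det) 0 = (Matrix.of A).det := by simp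
    exact hcont.eventually_ne (by simpa [h0] using hdet)
  have hev1 : ∀ᶠ t : ℝ in nhds 0,
      (Matrix.of (A + t • dA))⁻¹ * Matrix.of (A + t • dA) = 1 := by
    filter_upwards [hev] with t ht
    exact Matrix.nonsing_inv_mul _ (isUnit_iff_ne_zero.mpr ht)
  have hprod : ∀ i j, HasDerivAt
      (fun t : ℝ => ((Matrix.of (A + t • dA))⁻¹ * Matrix.of (A + t • dA)) i j)
      ((D * Matrix.of A + B * Matrix.of dA) i j) 0 := by
    intro i j
    have heq : (fun t : ℝ => ((Matrix.of (A + t • dA))⁻¹ * Matrix.of (A + t • dA)) i j)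
        = fun t => ∑ k, (Matrix.of (A + t • dA))⁻¹ i k * (A + t • dA) k j := by
      funext t; rw [Matrix.mul_apply]; rfl
    rw [heq]
    have hsum : HasDerivAt (fun t : ℝ => ∑ k, (Matrix.of (A + t • dA))⁻¹ i k * (A + t • dA) k j)
        (∑ k, (D i k * A k j + B i k * dA k j)) 0 := by
      apply HasDerivAt.fun_sum
      intro k _
      have := (hg i k).fun_mul (line_hasDerivAt A dA k j)
      simpa [hB] using this
    simpa [Matrix.add_apply, Matrix.mul_apply, Finset.sum_add_distrib] using hsum
  have hzero : ∀ i j, (D * Matrix.of A + B * Matrix.of dA) i j = 0 := by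
    intro i j
    have hconst : HasDerivAt
        (fun t : ℝ => ((Matrix.of (A + t • dA))⁻¹ * Matrix.of (A + t • dA)) i j) 0 0 := by
      have : (fun t : ℝ => ((Matrix.of (A + t • dA))⁻¹ * Matrix.of (A + t • dA)) i j)
          =ᶠ[nhds (0:ℝ)] fun _ => (1 : Matrix (Fin n) (Fin n) ℝ) i j := by
        filter_upwards [hev1] with t ht
        rw [ht]
      exact (hasDerivAt_const 0 _).congr_of_eventuallyEq this
    exact ((hprod i j).unique hconst)
  have hDA : D * Matrix.of A = -(B * Matrix.of dA) := by
    ext i j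
    have := hzero i j
    simp only [Matrix.add_apply, Matrix.neg_apply] at this ⊢
    linarith
  have hDval : D = -(B * Matrix.of dA * B) := by
    have h2 : Matrix.of A * B = 1 :=
      Matrix.mul_nonsing_inv _ ((Matrix.isUnit_iff_isUnit_det _).mp h)
    calc D = D * (Matrix.of A * B) := by rw [h2, Matrix.mul_one]
    _ = D * Matrix.of A * B := by rw [Matrix.mul_assoc]
    _ = -(B * Matrix.of dA) * B := by rw [hDA]
    _ = -(B * Matrix.of dA * B) := by rw [Matrix.neg_mul]
  have := hg i j
  rw [hDval] at this
  simpa [hB] using this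

lemma dot_inv_line {n : ℕ} (A dA : Fin n → Fin n → ℝ) (h : IsUnit (Matrix.of A))
    (a da w dw : Fin n → ℝ) :
    HasDerivAt (fun t : ℝ => (a + t • da) ⬝ᵥ ((Matrix.of (A + t • dA))⁻¹ *ᵥ (w + t • dw)))
      (da ⬝ᵥ ((Matrix.of A)⁻¹ *ᵥ w)
        + a ⬝ᵥ ((-((Matrix.of A)⁻¹ * Matrix.of dA * (Matrix.of A)⁻¹)) *ᵥ w)
        + a ⬝ᵥ ((Matrix.of A)⁻¹ *ᵥ dw)) 0 := by
  classical
  set B := (Matrix.of A)⁻¹ with hB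
  set D := -((Matrix.of A)⁻¹ * Matrix.of dA * (Matrix.of A)⁻¹) with hD
  have hterm : ∀ i, HasDerivAt
      (fun t : ℝ => (a + t • da) i * ((Matrix.of (A + t • dA))⁻¹ *ᵥ (w + t • dw)) i)
      (da i * (B *ᵥ w) i + a i * ((D *ᵥ w) i + (B *ᵥ dw) i)) 0 := by
    intro i
    have h1 : HasDerivAt (fun t : ℝ => (a + t • da) i) (da i) 0 := line_vec_hasDerivAt a da i
    have h2 : HasDerivAt (fun t : ℝ => ((Matrix.of (A + t • dA))⁻¹ *ᵥ (w + t • dw)) i)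
        ((D *ᵥ w) i + (B *ᵥ dw) i) 0 := by
      have heq : (fun t : ℝ => ((Matrix.of (A + t • dA))⁻¹ *ᵥ (w + t • dw)) i)
          = fun t => ∑ j, (Matrix.of (A + t • dA))⁻¹ i j * (w + t • dw) j := by
        funext t; rw [Matrix.mulVec, dotProduct]
      rw [heq]
      have hsum : HasDerivAt
          (fun t : ℝ => ∑ j, (Matrix.of (A + t • dA))⁻¹ i j * (w + t • dw) j)
          (∑ j, (D i j * w j + B i j * dw j)) 0 := by
        apply HasDerivAt.fun_sum
        intro j _
        have := (inv_line_hasDerivAt A dA h i j).fun_mul (line_vec_hasDerivAt w dw j)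
        simpa [hB, hD] using this
      simpa [Matrix.mulVec, dotProduct, Finset.sum_add_distrib] using hsum
    have := h1.fun_mul h2
    simpa using this
  have hsum := HasDerivAt.fun_sum (u := Finset.univ) (fun i _ => hterm i)
  have hfeq : (fun t : ℝ => ∑ i,
        (a + t • da) i * ((Matrix.of (A + t • dA))⁻¹ *ᵥ (w + t • dw)) i)
      = fun t : ℝ => (a + t • da) ⬝ᵥ ((Matrix.of (A + t • dA))⁻¹ *ᵥ (w + t • dw)) := by
    funext t; rw [dotProduct]
  have hveq : (∑ i, (da i * (B *ᵥ w) i + a i * ((D *ᵥ w) i + (B *ᵥ dw) i)))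
      = da ⬝ᵥ (B *ᵥ w) + a ⬝ᵥ (D *ᵥ w) + a ⬝ᵥ (B *ᵥ dw) := by
    simp [dotProduct, mul_add, Finset.sum_add_distrib, add_assoc]
  rw [hfeq, hveq] at hsum
  exact hsum

lemma sum_dotProduct' {k : ℕ} {ι : Type*} (s : Finset ι) (f : ι → Fin k → ℝ) (v : Fin k → ℝ) :
    (∑ j ∈ s, f j) ⬝ᵥ v = ∑ j ∈ s, f j ⬝ᵥ v := by
  simp only [dotProduct, Finset.sum_apply, Finset.sum_mul]
  exact Finset.sum_comm

lemma dotProduct_sum' {k : ℕ} {ι : Type*} (s : Finset ι) (v : Fin k → ℝ) (f : ι → Fin k → ℝ) :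
    v ⬝ᵥ (∑ j ∈ s, f j) = ∑ j ∈ s, v ⬝ᵥ f j := by
  simp only [dotProduct, Finset.sum_apply, Finset.mul_sum]
  exact Finset.sum_comm

lemma dot_sum_mulVec {k : ℕ} {ι : Type*} (s : Finset ι) (β v : Fin k → ℝ)
    (Mf : ι → Matrix (Fin k) (Fin k) ℝ) :
    β ⬝ᵥ ((∑ j ∈ s, Mf j) *ᵥ v) = ∑ j ∈ s, β ⬝ᵥ (Mf j *ᵥ v) := by
  classical
  induction s using Finset.induction with
  | empty => simp
  | insert j s hj ih =>
    rw [Finset.sum_insert hj, Finset.sum_insert hj, Matrix.add_mulVec, dotProduct_add, ih]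

lemma vecMulVec_mulVec' {k : ℕ} (x x' v : Fin k → ℝ) :
    Matrix.vecMulVec x x' *ᵥ v = (x' ⬝ᵥ v) • x := by
  funext i
  simp only [Matrix.mulVec, dotProduct, Matrix.vecMulVec_apply, Pi.smul_apply,
    smul_eq_mul, Finset.sum_mul]
  exact Finset.sum_congr rfl fun j _ => by ring


end Stmt10Aux

/-- the double-calibration estimator, viewed as a function of the
five HT-estimated quantities `(Â_R, â_R, Ĉ_R, ĉ_R, T̂_{Z(B)})`, is
differentiable at the population point `(A_R, a_R, C_R, c_R, T_{Z(B)})`, and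
the linear term of its first-order Taylor expansion (the Fréchet derivative
applied to the HT deviations) equals `∑_{j∈S} u_j/π_j - ∑_{j∈U_B} u_j`, with
`u_j` the influence values. -/


theorem stmt10 {ι : Type*} [Fintype ι] [DecidableEq ι] {K M : ℕ}
    (S : Finset ι) (π : ι → ℝ) (hπ : ∀ j, 0 < π j)
    (r : ι → ℝ) (hr : ∀ j, r j = 0 ∨ r j = 1)
    (y : ι → ℝ) (x : ι → Fin K → ℝ) (z : ι → Fin M → ℝ)
    (TZ : Fin M → ℝ) (TXB : Fin K → ℝ) (hTXB : TXB = ∑ j, x j)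
    (AR : Matrix (Fin K) (Fin K) ℝ)
    (hAR : AR = ∑ j, r j • vecMulVec (x j) (x j)) (hARu : IsUnit AR)
    (aR : Fin K → ℝ) (haR : aR = ∑ j, r j • (y j • x j))
    (CR : Matrix (Fin M) (Fin M) ℝ)
    (hCR : CR = ∑ j, r j • vecMulVec (z j) (z j)) (hCRu : IsUnit CR)
    (cR : Fin M → ℝ) (hcR : cR = ∑ j, r j • (y j • z j))
    (TZB : Fin M → ℝ) (hTZB : TZB = ∑ j, z j)
    -- the estimator as a function of the five estimated quantities
    (F : ((Fin K → Fin K → ℝ) × (Fin K → ℝ) × (Fin M → Fin M → ℝ) ×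
          (Fin M → ℝ) × (Fin M → ℝ)) → ℝ)
    (hF : F = fun q => q.2.1 ⬝ᵥ ((Matrix.of q.1)⁻¹ *ᵥ TXB)
        + q.2.2.2.1 ⬝ᵥ ((Matrix.of q.2.2.1)⁻¹ *ᵥ (TZ - q.2.2.2.2)))
    -- HT estimates of the five quantities
    (AhR : Matrix (Fin K) (Fin K) ℝ)
    (hAhR : AhR = ∑ j ∈ S, (π j)⁻¹ • (r j • vecMulVec (x j) (x j)))
    (ahR : Fin K → ℝ) (hahR : ahR = ∑ j ∈ S, (π j)⁻¹ • (r j • (y j • x j)))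
    (ChR : Matrix (Fin M) (Fin M) ℝ)
    (hChR : ChR = ∑ j ∈ S, (π j)⁻¹ • (r j • vecMulVec (z j) (z j)))
    (chR : Fin M → ℝ) (hchR : chR = ∑ j ∈ S, (π j)⁻¹ • (r j • (y j • z j)))
    (ThZB : Fin M → ℝ) (hThZB : ThZB = ∑ j ∈ S, (π j)⁻¹ • z j)
    -- the influence values
    (u : ι → ℝ)
    (hu : u = fun j =>
        r j * (y j * (x j ⬝ᵥ (AR⁻¹ *ᵥ TXB))
          - ((aR ᵥ* AR⁻¹) ⬝ᵥ x j) * (x j ⬝ᵥ (AR⁻¹ *ᵥ TXB)))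
      + r j * (y j * (z j ⬝ᵥ (CR⁻¹ *ᵥ (TZ - TZB)))
          - ((cR ᵥ* CR⁻¹) ⬝ᵥ z j) * (z j ⬝ᵥ (CR⁻¹ *ᵥ (TZ - TZB))))
      - (cR ᵥ* CR⁻¹) ⬝ᵥ z j) :
    DifferentiableAt ℝ F (Matrix.of.symm AR, aR, Matrix.of.symm CR, cR, TZB) ∧
      fderiv ℝ F (Matrix.of.symm AR, aR, Matrix.of.symm CR, cR, TZB)
          (Matrix.of.symm AhR - Matrix.of.symm AR, ahR - aR,
            Matrix.of.symm ChR - Matrix.of.symm CR, chR - cR, ThZB - TZB)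
        = (∑ j ∈ S, u j / π j) - ∑ j, u j := by
  classical
  have hdiff : DifferentiableAt ℝ F (Matrix.of.symm AR, aR, Matrix.of.symm CR, cR, TZB) := by
    rw [hF]
    set P := ((Fin K → Fin K → ℝ) × (Fin K → ℝ) × (Fin M → Fin M → ℝ) ×
            (Fin M → ℝ) × (Fin M → ℝ))
    set p : P := (Matrix.of.symm AR, aR, Matrix.of.symm CR, cR, TZB) with hp
    have hAu : IsUnit (Matrix.of (Matrix.of.symm AR : Fin K → Fin K → ℝ)) := hARu
    have hCu : IsUnit (Matrix.of (Matrix.of.symm CR : Fin M → Fin M → ℝ)) := hCRu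
    have hproj1 : Differentiable ℝ (fun q : ((Fin K → Fin K → ℝ) × (Fin K → ℝ) × (Fin M → Fin M → ℝ) × (Fin M → ℝ) × (Fin M → ℝ)) => q.1) := by
      fun_prop
    have hproj3 : Differentiable ℝ (fun q : ((Fin K → Fin K → ℝ) × (Fin K → ℝ) × (Fin M → Fin M → ℝ) × (Fin M → ℝ) × (Fin M → ℝ)) => q.2.2.1) := by
      fun_prop
    have hinv1 : ∀ i j, DifferentiableAt ℝ (fun q : P => (Matrix.of q.1)⁻¹ i j) p := by
      intro i j
      exact (inv_entry_diff hAu i j).comp p (hproj1.differentiableAt)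
    have hinv2 : ∀ i j, DifferentiableAt ℝ (fun q : P => (Matrix.of q.2.2.1)⁻¹ i j) p := by
      intro i j
      exact (inv_entry_diff hCu i j).comp p (hproj3.differentiableAt)
    apply DifferentiableAt.add
    · have heq : (fun q : P => q.2.1 ⬝ᵥ ((Matrix.of q.1)⁻¹ *ᵥ TXB))
          = fun q => ∑ i, q.2.1 i * ∑ j, (Matrix.of q.1)⁻¹ i j * TXB j := rfl
      rw [heq]
      apply DifferentiableAt.fun_sum
      intro i _
      apply DifferentiableAt.mul
      · fun_prop
      · exact DifferentiableAt.fun_sum fun j _ => (hinv1 i j).mul_const _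
    · have heq : (fun q : P => q.2.2.2.1 ⬝ᵥ ((Matrix.of q.2.2.1)⁻¹ *ᵥ (TZ - q.2.2.2.2)))
          = fun q => ∑ i, q.2.2.2.1 i * ∑ j, (Matrix.of q.2.2.1)⁻¹ i j * (TZ j - q.2.2.2.2 j) := rfl
      rw [heq]
      apply DifferentiableAt.fun_sum
      intro i _
      apply DifferentiableAt.mul
      · fun_prop
      · apply DifferentiableAt.fun_sum
        intro j _
        apply DifferentiableAt.mul (hinv2 i j)
        fun_prop
  refine ⟨hdiff, ?_⟩
  have hval : fderiv ℝ F (Matrix.of.symm AR, aR, Matrix.of.symm CR, cR, TZB)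
          (Matrix.of.symm AhR - Matrix.of.symm AR, ahR - aR,
            Matrix.of.symm ChR - Matrix.of.symm CR, chR - cR, ThZB - TZB)
      = ((ahR - aR) ⬝ᵥ (AR⁻¹ *ᵥ TXB)
          + aR ⬝ᵥ ((-(AR⁻¹ * (AhR - AR) * AR⁻¹)) *ᵥ TXB)
          + aR ⬝ᵥ (AR⁻¹ *ᵥ (0 : Fin K → ℝ)))
        + ((chR - cR) ⬝ᵥ (CR⁻¹ *ᵥ (TZ - TZB))
          + cR ⬝ᵥ ((-(CR⁻¹ * (ChR - CR) * CR⁻¹)) *ᵥ (TZ - TZB))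
          + cR ⬝ᵥ (CR⁻¹ *ᵥ (-(ThZB - TZB)))) := by
    set p : ((Fin K → Fin K → ℝ) × (Fin K → ℝ) × (Fin M → Fin M → ℝ) ×
            (Fin M → ℝ) × (Fin M → ℝ)) := (Matrix.of.symm AR, aR, Matrix.of.symm CR, cR, TZB) with hp
    set Δ : ((Fin K → Fin K → ℝ) × (Fin K → ℝ) × (Fin M → Fin M → ℝ) ×
            (Fin M → ℝ) × (Fin M → ℝ)) := (Matrix.of.symm AhR - Matrix.of.symm AR, ahR - aR,
              Matrix.of.symm ChR - Matrix.of.symm CR, chR - cR, ThZB - TZB) with hΔ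
    have hAu : IsUnit (Matrix.of (Matrix.of.symm AR : Fin K → Fin K → ℝ)) := hARu
    have hCu : IsUnit (Matrix.of (Matrix.of.symm CR : Fin M → Fin M → ℝ)) := hCRu
    have hline : HasDerivAt (fun t : ℝ => p + t • Δ) Δ 0 := by
      simpa using ((hasDerivAt_id (0 : ℝ)).smul_const Δ).const_add p
    have hp0 : p + (0 : ℝ) • Δ = p := by simp
    have hF0 : HasFDerivAt F (fderiv ℝ F p) (p + (0 : ℝ) • Δ) := by
      rw [hp0]; exact hdiff.hasFDerivAt
    have hcomp : HasDerivAt (fun t : ℝ => F (p + t • Δ)) (fderiv ℝ F p Δ) 0 :=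
      HasFDerivAt.comp_hasDerivAt 0 hF0 hline
    have hd1 := dot_inv_line (Matrix.of.symm AR) (Matrix.of.symm AhR - Matrix.of.symm AR) hAu
      aR (ahR - aR) TXB 0
    have hd2 := dot_inv_line (Matrix.of.symm CR) (Matrix.of.symm ChR - Matrix.of.symm CR) hCu
      cR (chR - cR) (TZ - TZB) (-(ThZB - TZB))
    have hD := hd1.fun_add hd2
    have hfun : (fun t : ℝ =>
          (aR + t • (ahR - aR)) ⬝ᵥ ((Matrix.of (Matrix.of.symm AR
              + t • (Matrix.of.symm AhR - Matrix.of.symm AR)))⁻¹ *ᵥ (TXB + t • (0 : Fin K → ℝ)))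
          + (cR + t • (chR - cR)) ⬝ᵥ ((Matrix.of (Matrix.of.symm CR
              + t • (Matrix.of.symm ChR - Matrix.of.symm CR)))⁻¹
              *ᵥ ((TZ - TZB) + t • (-(ThZB - TZB)))))
        = fun t : ℝ => F (p + t • Δ) := by
      funext t
      rw [hF]
      have hv1 : TXB + t • (0 : Fin K → ℝ) = TXB := by simp
      have hv2 : (TZ - TZB) + t • (-(ThZB - TZB)) = TZ - (TZB + t • (ThZB - TZB)) := by
        funext k
        simp only [Pi.add_apply, Pi.sub_apply, Pi.smul_apply, Pi.neg_apply, smul_eq_mul]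
        ring
      rw [hv1, hv2]
      rfl
    rw [hfun] at hD
    have := hcomp.unique hD
    rw [this]
    rfl
  rw [hval]
  set w1 : Fin K → ℝ := AR⁻¹ *ᵥ TXB with hw1
  set β : Fin K → ℝ := aR ᵥ* AR⁻¹ with hβ
  set w2 : Fin M → ℝ := CR⁻¹ *ᵥ (TZ - TZB) with hw2
  set γ : Fin M → ℝ := cR ᵥ* CR⁻¹ with hγ
  -- clean up the left-hand side
  have hL1 : aR ⬝ᵥ (AR⁻¹ *ᵥ (0 : Fin K → ℝ)) = 0 := by
    rw [Matrix.mulVec_zero, dotProduct_zero]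
  have hL2 : aR ⬝ᵥ ((-(AR⁻¹ * (AhR - AR) * AR⁻¹)) *ᵥ TXB)
      = -(β ⬝ᵥ ((AhR - AR) *ᵥ w1)) := by
    rw [Matrix.neg_mulVec, dotProduct_neg]
    congr 1
    rw [hw1, ← Matrix.mulVec_mulVec, ← Matrix.mulVec_mulVec, Matrix.dotProduct_mulVec]
  have hL3 : cR ⬝ᵥ ((-(CR⁻¹ * (ChR - CR) * CR⁻¹)) *ᵥ (TZ - TZB))
      = -(γ ⬝ᵥ ((ChR - CR) *ᵥ w2)) := by
    rw [Matrix.neg_mulVec, dotProduct_neg]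
    congr 1
    rw [hw2, ← Matrix.mulVec_mulVec, ← Matrix.mulVec_mulVec, Matrix.dotProduct_mulVec]
  have hL4 : cR ⬝ᵥ (CR⁻¹ *ᵥ (-(ThZB - TZB))) = -(γ ⬝ᵥ (ThZB - TZB)) := by
    rw [Matrix.mulVec_neg, dotProduct_neg, Matrix.dotProduct_mulVec]
  rw [hL1, hL2, hL3, hL4]
  -- expand the five linear terms into per-unit sums
  have e1 : (ahR - aR) ⬝ᵥ w1
      = (∑ j ∈ S, (π j)⁻¹ * (r j * (y j * (x j ⬝ᵥ w1))))
        - ∑ j, r j * (y j * (x j ⬝ᵥ w1)) := by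
    rw [hahR, haR, sub_dotProduct, sum_dotProduct', sum_dotProduct']
    congr 1 <;> exact Finset.sum_congr rfl fun j _ => by
      simp [smul_dotProduct, smul_eq_mul]
  have e2 : β ⬝ᵥ ((AhR - AR) *ᵥ w1)
      = (∑ j ∈ S, (π j)⁻¹ * (r j * ((β ⬝ᵥ x j) * (x j ⬝ᵥ w1))))
        - ∑ j, r j * ((β ⬝ᵥ x j) * (x j ⬝ᵥ w1)) := by
    rw [hAhR, hAR, Matrix.sub_mulVec, dotProduct_sub, dot_sum_mulVec, dot_sum_mulVec]
    congr 1 <;> exact Finset.sum_congr rfl fun j _ => by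
      simp only [Matrix.smul_mulVec, vecMulVec_mulVec', dotProduct_smul,
        smul_eq_mul]
      ring
  have e3 : (chR - cR) ⬝ᵥ w2
      = (∑ j ∈ S, (π j)⁻¹ * (r j * (y j * (z j ⬝ᵥ w2))))
        - ∑ j, r j * (y j * (z j ⬝ᵥ w2)) := by
    rw [hchR, hcR, sub_dotProduct, sum_dotProduct', sum_dotProduct']
    congr 1 <;> exact Finset.sum_congr rfl fun j _ => by
      simp [smul_dotProduct, smul_eq_mul]
  have e4 : γ ⬝ᵥ ((ChR - CR) *ᵥ w2)
      = (∑ j ∈ S, (π j)⁻¹ * (r j * ((γ ⬝ᵥ z j) * (z j ⬝ᵥ w2))))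
        - ∑ j, r j * ((γ ⬝ᵥ z j) * (z j ⬝ᵥ w2)) := by
    rw [hChR, hCR, Matrix.sub_mulVec, dotProduct_sub, dot_sum_mulVec, dot_sum_mulVec]
    congr 1 <;> exact Finset.sum_congr rfl fun j _ => by
      simp only [Matrix.smul_mulVec, vecMulVec_mulVec', dotProduct_smul,
        smul_eq_mul]
      ring
  have e5 : γ ⬝ᵥ (ThZB - TZB)
      = (∑ j ∈ S, (π j)⁻¹ * (γ ⬝ᵥ z j)) - ∑ j, γ ⬝ᵥ z j := by
    rw [hThZB, hTZB, dotProduct_sub, dotProduct_sum', dotProduct_sum']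
    congr 1 <;> exact Finset.sum_congr rfl fun j _ => by
      simp [dotProduct_smul, smul_eq_mul]
  -- expand the right-hand side
  have hRS : ∑ j ∈ S, u j / π j
      = (∑ j ∈ S, (π j)⁻¹ * (r j * (y j * (x j ⬝ᵥ w1))))
        - (∑ j ∈ S, (π j)⁻¹ * (r j * ((β ⬝ᵥ x j) * (x j ⬝ᵥ w1))))
        + (∑ j ∈ S, (π j)⁻¹ * (r j * (y j * (z j ⬝ᵥ w2))))
        - (∑ j ∈ S, (π j)⁻¹ * (r j * ((γ ⬝ᵥ z j) * (z j ⬝ᵥ w2))))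
        - ∑ j ∈ S, (π j)⁻¹ * (γ ⬝ᵥ z j) := by
    rw [← Finset.sum_sub_distrib, ← Finset.sum_add_distrib, ← Finset.sum_sub_distrib,
      ← Finset.sum_sub_distrib]
    refine Finset.sum_congr rfl fun j _ => ?_
    simp only [hu]
    field_simp
    ring
  have hUS : ∑ j, u j
      = (∑ j, r j * (y j * (x j ⬝ᵥ w1)))
        - (∑ j, r j * ((β ⬝ᵥ x j) * (x j ⬝ᵥ w1)))
        + (∑ j, r j * (y j * (z j ⬝ᵥ w2)))
        - (∑ j, r j * ((γ ⬝ᵥ z j) * (z j ⬝ᵥ w2)))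
        - ∑ j, γ ⬝ᵥ z j := by
    rw [← Finset.sum_sub_distrib, ← Finset.sum_add_distrib, ← Finset.sum_sub_distrib,
      ← Finset.sum_sub_distrib]
    refine Finset.sum_congr rfl fun j _ => ?_
    simp only [hu]
    ring
  rw [e1, e2, e3, e4, e5, hRS, hUS]
  ring
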